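/- Suppose I contains an unbounded subset D of κ. Then the family C_D = {N_f : f ∈ ν^D} is a partition of ν^κ into 2^κ-many (at least) nonempty pairwise disjoint I-clopen sets; consequently (ν^κ, τ_I) is not κ-compact (there is an open cover with no subcover of size < κ), and its density character is exactly 2^κ. -/

import Mathlib

open Set Cardinal TopologicalSpace

/-- A κ-complete proper ideal on κ extending the ideal of bounded sets. -/
structure IsGoodIdeal (κ : Type) [LinearOrder κ] (I : Set (Set κ)) : Prop where
  lower : ∀ ⦃A B : Set κ⦄, A ⊆ B → B ∈ I → A ∈ I
  complete : ∀ J : Set (Set κ), J ⊆ I → #J < #κ → ⋃₀ J ∈ I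
  proper : (Set.univ : Set κ) ∉ I
  bounded_mem : ∀ s : Set κ, Set.Bounded (· < ·) s → s ∈ I

/-- The basic cone `N_f` determined by the restriction of `f` to `D`. -/
def cone {κ ν : Type} (D : Set κ) (f : κ → ν) : Set (κ → ν) :=
  {x | ∀ α ∈ D, x α = f α}

/-- The ideal topology `τ_I` on `ν^κ`. -/
def idealTop {κ : Type} (I : Set (Set κ)) (ν : Type) : TopologicalSpace (κ → ν) :=
  TopologicalSpace.generateFrom {S | ∃ D ∈ I, ∃ f : κ → ν, S = cone D f}

/-- The bounded topology `τ_b` on `ν^κ`. -/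
def boundedTop (κ ν : Type) [LinearOrder κ] : TopologicalSpace (κ → ν) :=
  TopologicalSpace.generateFrom
    {S | ∃ D : Set κ, Set.Bounded (· < ·) D ∧ ∃ f : κ → ν, S = cone D f}

section Aux

variable {κ ν : Type} [LinearOrder κ]

lemma mem_cone_self (D : Set κ) (f : κ → ν) : f ∈ cone D f := fun _ _ => rfl

lemma cone_isOpen {I : Set (Set κ)} {D : Set κ} (hD : D ∈ I) (f : κ → ν) :
    @IsOpen _ (idealTop I ν) (cone D f) :=
  TopologicalSpace.isOpen_generateFrom_of_mem ⟨D, hD, f, rfl⟩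

lemma cone_isClosed {I : Set (Set κ)} {D : Set κ} (hD : D ∈ I) (f : κ → ν) :
    @IsClosed _ (idealTop I ν) (cone D f) := by
  letI := idealTop I ν
  rw [← isOpen_compl_iff]
  have h : (cone D f)ᶜ = ⋃ x ∈ (cone D f)ᶜ, cone D x := by
    ext y
    simp only [mem_iUnion, mem_compl_iff, exists_prop]
    constructor
    · intro hy; exact ⟨y, hy, mem_cone_self D y⟩
    · rintro ⟨x, hx, hyx⟩ hy
      exact hx fun α hα => by rw [← hyx α hα, hy α hα]
  rw [h]
  exact isOpen_biUnion fun x _ => cone_isOpen hD x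

/-- An unbounded member of a good ideal has full cardinality. -/
lemma card_of_unbounded {I : Set (Set κ)} (hunc : ℵ₀ < #κ) (hI : IsGoodIdeal κ I)
    {D : Set κ} (hD : D ∈ I) (hDub : ¬ Set.Bounded (· < ·) D) : #↥D = #κ := by
  refine le_antisymm (mk_set_le D) ?_
  by_contra h
  rw [not_le] at h
  set J : Set (Set κ) := (fun d => {x | x < d}) '' D with hJdef
  have hJI : J ⊆ I := by
    rintro _ ⟨d, hd, rfl⟩
    exact hI.bounded_mem _ ⟨d, fun x hx => hx⟩
  have hLI : ⋃₀ J ∈ I := hI.complete J hJI (Cardinal.mk_image_le.trans_lt h)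
  by_cases hU : ∃ u, ∀ d ∈ D, d ≤ u
  · obtain ⟨u, hu⟩ := hU
    by_cases huD : u ∈ D
    · -- univ ⊆ ⋃₀ J ∪ D, both in I, so univ ∈ I: contradiction with properness
      have hsub : (Set.univ : Set κ) ⊆ ⋃₀ J ∪ D := by
        intro x _
        rcases lt_or_ge x u with hx | hx
        · exact Or.inl ⟨{y | y < u}, ⟨u, huD, rfl⟩, hx⟩
        · right
          by_contra hxD
          exact hDub ⟨x, fun d hd => lt_of_le_of_ne ((hu d hd).trans hx)
            (fun he => hxD (he ▸ hd))⟩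
      have h2 : ⋃₀ J ∪ D ∈ I := by
        have := hI.complete {⋃₀ J, D} (by rintro S (rfl | rfl); exacts [hLI, hD])
          (lt_of_le_of_lt (by
            simpa using (Cardinal.mk_insert_le (s := ({D} : Set (Set κ))) (a := ⋃₀ J)).trans
              (by norm_num : #({D} : Set (Set κ)) + 1 ≤ ((2 : ℕ) : Cardinal))) (lt_trans (Cardinal.nat_lt_aleph0 2) hunc))
        simpa [Set.sUnion_pair] using this
      exact hI.proper (hI.lower hsub h2)
    · exact hDub ⟨u, fun d hd => lt_of_le_of_ne (hu d hd) (fun he => huD (he ▸ hd))⟩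
  · push_neg at hU
    have hsub : (Set.univ : Set κ) ⊆ ⋃₀ J := by
      intro x _
      obtain ⟨d, hd, hxd⟩ := hU x
      exact ⟨{y | y < d}, ⟨d, hd, rfl⟩, hxd⟩
    exact hI.proper (hI.lower hsub hLI)

end Aux

theorem stmt_6 (κ ν : Type) [LinearOrder κ]
    (hreg : (#κ).IsRegular) (hunc : ℵ₀ < #κ) (hν : #ν = 2 ∨ #ν = #κ)
    (I : Set (Set κ)) (hI : IsGoodIdeal κ I)
    (D : Set κ) (hD : D ∈ I) (hDub : ¬ Set.Bounded (· < ·) D) :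
    (∀ f : κ → ν, (cone D f).Nonempty ∧ @IsClopen _ (idealTop I ν) (cone D f)) ∧
    (∀ f g : κ → ν, (∃ α ∈ D, f α ≠ g α) → Disjoint (cone D f) (cone D g)) ∧
    (⋃ f : κ → ν, cone D f) = Set.univ ∧
    (2 : Cardinal) ^ #κ ≤ #↥{S : Set (κ → ν) | ∃ f : κ → ν, S = cone D f} ∧
    (∃ 𝒞 : Set (Set (κ → ν)), (∀ U ∈ 𝒞, @IsOpen _ (idealTop I ν) U) ∧ ⋃₀ 𝒞 = Set.univ ∧
      ∀ 𝒟 ⊆ 𝒞, ⋃₀ 𝒟 = Set.univ → #κ ≤ #↥𝒟) ∧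
    (∀ E : Set (κ → ν), @Dense _ (idealTop I ν) E → (2 : Cardinal) ^ #κ ≤ #↥E) ∧
    (∃ E : Set (κ → ν), @Dense _ (idealTop I ν) E ∧ #↥E ≤ (2 : Cardinal) ^ #κ) := by
  classical
  letI := idealTop I ν
  -- basic cardinal facts
  have h2κ : (2 : Cardinal) ≤ #κ :=
    le_of_lt (lt_of_lt_of_le (by exact_mod_cast Cardinal.nat_lt_aleph0 2) hunc.le)
  have hν2 : (2 : Cardinal) ≤ #ν := by
    rcases hν with h | h <;> rw [h]
    exact h2κ
  have hνκ : #ν ≤ #κ := by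
    rcases hν with h | h <;> rw [h]
    exact h2κ
  have hνne : Nonempty ν := Cardinal.mk_ne_zero_iff.mp (by positivity)
  obtain ⟨ν0⟩ := hνne
  have hDcard : #↥D = #κ := card_of_unbounded hunc hI hD hDub
  -- the extension map
  let ψ : (↥D → ν) → (κ → ν) := fun g α => if h : α ∈ D then g ⟨α, h⟩ else ν0
  have hψ : ∀ (g : ↥D → ν) (α : κ) (h : α ∈ D), ψ g α = g ⟨α, h⟩ := fun g α h => dif_pos h
  -- cardinality of the restriction space
  have hcard : (2 : Cardinal) ^ #κ ≤ #(↥D → ν) := by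
    rw [← Cardinal.power_def, hDcard]
    exact Cardinal.power_le_power_right hν2
  -- restriction injectivity
  have hrestr : ∀ g₁ g₂ : ↥D → ν, (∀ α ∈ D, ψ g₁ α = ψ g₂ α) → g₁ = g₂ := by
    intro g₁ g₂ hgg
    funext α
    rw [← hψ g₁ α α.2, ← hψ g₂ α α.2, hgg α α.2]
  refine ⟨fun f => ⟨⟨f, mem_cone_self D f⟩, cone_isClosed hD f, cone_isOpen hD f⟩,
    ?_, ?_, ?_, ?_, ?_, ?_⟩
  · -- disjointness
    rintro f g ⟨α, hα, hne⟩
    rw [Set.disjoint_left]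
    intro x hxf hxg
    exact hne ((hxf α hα).symm.trans (hxg α hα))
  · -- union is everything
    exact Set.eq_univ_of_forall fun x => Set.mem_iUnion.mpr ⟨x, mem_cone_self D x⟩
  · -- at least 2^κ many cones
    refine hcard.trans (Cardinal.mk_le_of_injective
      (f := fun g => (⟨cone D (ψ g), ψ g, rfl⟩ : ↥{S : Set (κ → ν) | ∃ f, S = cone D f})) ?_)
    intro g₁ g₂ hgg
    have : cone D (ψ g₁) = cone D (ψ g₂) := congrArg Subtype.val hgg
    exact hrestr g₁ g₂ fun α hα => (this ▸ mem_cone_self D (ψ g₁)) α hα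
  · -- not κ-compact
    refine ⟨{S : Set (κ → ν) | ∃ f, S = cone D f}, ?_, ?_, ?_⟩
    · rintro _ ⟨f, rfl⟩; exact cone_isOpen hD f
    · exact Set.eq_univ_of_forall fun x => ⟨cone D x, ⟨x, rfl⟩, mem_cone_self D x⟩
    · intro 𝒟 h𝒟sub h𝒟cov
      by_contra hlt
      rw [not_le] at hlt
      let r : ↥𝒟 → (↥D → ν) := fun S α => Classical.choose (h𝒟sub S.2) α.1
      have hrspec : ∀ S : ↥𝒟, (S : Set (κ → ν)) = cone D (Classical.choose (h𝒟sub S.2)) :=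
        fun S => Classical.choose_spec (h𝒟sub S.2)
      have hnsurj : ¬ Function.Surjective r := by
        intro hs
        exact absurd (hcard.trans (Cardinal.mk_le_of_surjective hs))
          (not_le.mpr (hlt.trans (Cardinal.cantor _)))
      unfold Function.Surjective at hnsurj
      push_neg at hnsurj
      obtain ⟨g, hg⟩ := hnsurj
      have hx : ψ g ∈ ⋃₀ 𝒟 := h𝒟cov ▸ Set.mem_univ _
      obtain ⟨S, hS, hxS⟩ := hx
      refine hg ⟨S, hS⟩ ?_
      funext α
      have hxS' : ψ g ∈ cone D (Classical.choose (h𝒟sub hS)) := by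
        have h1 := hrspec ⟨S, hS⟩
        simp only [Subtype.coe_mk] at h1
        rwa [h1] at hxS
      have := hxS' α.1 α.2
      simpa [r, hψ g α.1 α.2] using this.symm
  · -- density lower bound
    intro E hdense
    have hmeet : ∀ g : ↥D → ν, (cone D (ψ g) ∩ E).Nonempty :=
      fun g => (dense_iff_inter_open.mp hdense) _ (cone_isOpen hD (ψ g))
        ⟨ψ g, mem_cone_self D (ψ g)⟩
    choose e he hmemE using hmeet
    refine hcard.trans (Cardinal.mk_le_of_injective (f := fun g => (⟨e g, hmemE g⟩ : ↥E)) ?_)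
    intro g₁ g₂ hgg
    have heq : e g₁ = e g₂ := congrArg Subtype.val hgg
    refine hrestr g₁ g₂ fun α hα => ?_
    rw [← he g₁ α hα, heq, he g₂ α hα]
  · -- small dense set: the whole space
    refine ⟨Set.univ, dense_univ, ?_⟩
    rw [Cardinal.mk_univ, Cardinal.mk_arrow]
    simp only [Cardinal.lift_id]
    calc (#ν) ^ (#κ) ≤ (#κ) ^ (#κ) := Cardinal.power_le_power_right hνκ
      _ = 2 ^ (#κ) := Cardinal.power_self_eq hunc.le
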